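/- Let (X, Y) be a complete coresolving cotorsion pair in an abelian category A and set ω := X ∩ Y. Then for every object A of A one has: A ∈ X if and only if every morphism f : A → Y with Y ∈ Y factors through some object of ω. -/

import Mathlib

open CategoryTheory CategoryTheory.Limits CategoryTheory.Abelian

universe w v u

variable {C : Type u} [Category.{v} C] [Abelian C]

/-- `f : X ⟶ Y` and `g : Y ⟶ Z` form a short exact sequence `0 → X → Y → Z → 0`. -/
def IsShortExactSeq {X Y Z : C} (f : X ⟶ Y) (g : Y ⟶ Z) : Prop :=
  ∃ zero : f ≫ g = 0, (ShortComplex.mk f g zero).ShortExact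

/-- `(D, E)` is a cotorsion pair: each class is the `Ext¹`-orthogonal of the other. -/
def IsCotorsionPair [HasExt.{w} C] (D E : Set C) : Prop :=
  (∀ X : C, X ∈ D ↔ ∀ Y ∈ E, Subsingleton (Ext.{w} X Y 1)) ∧
  (∀ Y : C, Y ∈ E ↔ ∀ X ∈ D, Subsingleton (Ext.{w} X Y 1))

/-- `(D, E)` is a complete cotorsion pair. -/
def IsCompleteCotorsionPair [HasExt.{w} C] (D E : Set C) : Prop :=
  IsCotorsionPair.{w} D E ∧
  (∀ Z : C, ∃ (X Y : C) (f : Y ⟶ X) (g : X ⟶ Z), IsShortExactSeq f g ∧ X ∈ D ∧ Y ∈ E) ∧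
  (∀ Z : C, ∃ (Y X : C) (f : Z ⟶ Y) (g : Y ⟶ X), IsShortExactSeq f g ∧ Y ∈ E ∧ X ∈ D)

/-- A cotorsion pair `(D, E)` is coresolving if `E` is closed under cokernels of
monomorphisms. -/
def IsCoresolving (E : Set C) : Prop :=
  ∀ ⦃E₁ E₂ Z : C⦄ (f : E₁ ⟶ E₂) (g : E₂ ⟶ Z),
    IsShortExactSeq f g → E₁ ∈ E → E₂ ∈ E → Z ∈ E

/-- A morphism factors through some object of the class `ω`. -/
def FactorsThroughClass (ω : Set C) {A B : C} (f : A ⟶ B) : Prop :=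
  ∃ (I : C) (u : A ⟶ I) (v : I ⟶ B), I ∈ ω ∧ u ≫ v = f

section Stmt2Aux

open DerivedCategory Pretriangulated

universe w''

variable (C) in
/-- Taking the degree 0 homology of the single complex in degree 0 gives back the object. -/
noncomputable def stmt2SingleHomologyIso [HasDerivedCategory.{w''} C] :
    DerivedCategory.singleFunctor C 0 ⋙ DerivedCategory.homologyFunctor C 0 ≅ 𝟭 C :=
  Functor.isoWhiskerRight ((SingleFunctors.evaluation _ _ 0).mapIso
      (DerivedCategory.singleFunctorsPostcompQIso C)) (DerivedCategory.homologyFunctor C 0) ≪≫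
    Functor.associator _ _ _ ≪≫
    Functor.isoWhiskerLeft (HomologicalComplex.single C (ComplexShape.up ℤ) 0)
      (DerivedCategory.homologyFunctorFactors C 0) ≪≫
    HomologicalComplex.homologyFunctorSingleIso C (ComplexShape.up ℤ) 0

lemma stmt2_shiftedHom_eq_zero [HasExt.{w} C] [HasDerivedCategory.{w''} C] {P M : C}
    (h : Subsingleton (Ext.{w} P M 1))
    (α : (DerivedCategory.singleFunctor C 0).obj P ⟶
      ((DerivedCategory.singleFunctor C 0).obj M)⟦((1 : ℕ) : ℤ)⟧) : α = 0 := by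
  have : Ext.homEquiv.symm α = (0 : Ext.{w} P M 1) := Subsingleton.elim _ _
  calc α = Ext.homEquiv (Ext.homEquiv.symm α) := (Equiv.apply_symm_apply _ _).symm
    _ = (0 : Ext.{w} P M 1).hom := by rw [this]
    _ = 0 := Ext.zero_hom P M 1

/-- If `Ext¹ W S.X₁` vanishes, any map `W ⟶ S.X₃` lifts through the epimorphism `S.g`. -/
lemma stmt2_exists_lift_of_ext [HasExt.{w} C] {S : ShortComplex C} (hS : S.ShortExact)
    {W : C} (v : W ⟶ S.X₃) (hext : Subsingleton (Ext.{w} W S.X₁ 1)) :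
    ∃ l : W ⟶ S.X₂, l ≫ S.g = v := by
  letI := HasDerivedCategory.standard C
  have hT := hS.singleTriangle_distinguished
  have hobs : (DerivedCategory.singleFunctor C 0).map v ≫ hS.singleTriangle.mor₃ = 0 :=
    stmt2_shiftedHom_eq_zero hext _
  obtain ⟨l', hl'⟩ := Pretriangulated.Triangle.coyoneda_exact₃ hS.singleTriangle hT
    ((DerivedCategory.singleFunctor C 0).map v) hobs
  set H := DerivedCategory.homologyFunctor C 0 with hH
  set e := stmt2SingleHomologyIso C with he
  refine ⟨e.inv.app W ≫ H.map l' ≫ e.hom.app S.X₂, ?_⟩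
  have h1 : H.map hS.singleTriangle.mor₂ ≫ e.hom.app S.X₃ = e.hom.app S.X₂ ≫ S.g := by
    have := e.hom.naturality S.g
    dsimp at this
    exact this
  have h2 : H.map ((DerivedCategory.singleFunctor C 0).map v) ≫ e.hom.app S.X₃ =
      e.hom.app W ≫ v := by
    have := e.hom.naturality v
    dsimp at this
    simpa using this
  calc (e.inv.app W ≫ H.map l' ≫ e.hom.app S.X₂) ≫ S.g
      = e.inv.app W ≫ H.map l' ≫ (e.hom.app S.X₂ ≫ S.g) := by
        exact (Category.assoc _ _ _).trans (congrArg _ (Category.assoc _ _ _))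
    _ = e.inv.app W ≫ H.map l' ≫ H.map hS.singleTriangle.mor₂ ≫ e.hom.app S.X₃ := by
        exact congrArg (e.inv.app W ≫ ·) (congrArg (H.map l' ≫ ·) h1.symm)
    _ = e.inv.app W ≫ H.map (l' ≫ hS.singleTriangle.mor₂) ≫ e.hom.app S.X₃ := by
        exact congrArg (e.inv.app W ≫ ·) ((congrArg (· ≫ e.hom.app S.X₃) (H.map_comp l' hS.singleTriangle.mor₂)).trans (Category.assoc _ _ _)).symm
    _ = e.inv.app W ≫ H.map ((DerivedCategory.singleFunctor C 0).map v) ≫ e.hom.app S.X₃ := by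
        exact congrArg (fun x => e.inv.app W ≫ H.map x ≫ e.hom.app S.X₃) hl'.symm
    _ = e.inv.app W ≫ e.hom.app W ≫ v := by rw [h2]
    _ = v := by simp


/-- If `Ext¹ S.X₃ M` vanishes, any map `S.X₁ ⟶ M` extends along the monomorphism `S.f`. -/
lemma stmt2_exists_extend_of_ext [HasExt.{w} C] {S : ShortComplex C} (hS : S.ShortExact)
    {M : C} (f : S.X₁ ⟶ M) (hext : Subsingleton (Ext.{w} S.X₃ M 1)) :
    ∃ h : S.X₂ ⟶ M, S.f ≫ h = f := by
  letI := HasDerivedCategory.standard C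
  have hT := Pretriangulated.inv_rot_of_distTriang _ hS.singleTriangle_distinguished
  have h0 : hS.singleδ ≫ ((DerivedCategory.singleFunctor C 0).map f)⟦(1 : ℤ)⟧' = 0 :=
    stmt2_shiftedHom_eq_zero hext _
  have hobs : hS.singleTriangle.invRotate.mor₁ ≫ (DerivedCategory.singleFunctor C 0).map f = 0 := by
    change (-(hS.singleδ)⟦(-1 : ℤ)⟧' ≫ (shiftFunctorCompIsoId (DerivedCategory C) (1 : ℤ) (-1 : ℤ)
      (by omega)).hom.app ((DerivedCategory.singleFunctor C 0).obj S.X₁)) ≫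
      (DerivedCategory.singleFunctor C 0).map f = 0
    rw [Preadditive.neg_comp, neg_eq_zero, Category.assoc]
    erw [← (shiftFunctorCompIsoId (DerivedCategory C) (1 : ℤ) (-1 : ℤ)
      (by omega)).hom.naturality ((DerivedCategory.singleFunctor C 0).map f)]
    dsimp only [Functor.comp_map]
    rw [← Functor.map_comp_assoc, h0, Functor.map_zero, zero_comp]
  obtain ⟨g, hg⟩ := Pretriangulated.Triangle.yoneda_exact₂ hS.singleTriangle.invRotate hT
    ((DerivedCategory.singleFunctor C 0).map f) hobs
  have hg' : (DerivedCategory.singleFunctor C 0).map f =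
      (DerivedCategory.singleFunctor C 0).map S.f ≫ g := by
    exact hg
  set H := DerivedCategory.homologyFunctor C 0 with hH
  set e := stmt2SingleHomologyIso C with he
  refine ⟨e.inv.app S.X₂ ≫ H.map g ≫ e.hom.app M, ?_⟩
  have h1 : S.f ≫ e.inv.app S.X₂ =
      e.inv.app S.X₁ ≫ H.map ((DerivedCategory.singleFunctor C 0).map S.f) := by
    have := e.inv.naturality S.f
    dsimp at this
    simpa using this
  have h2 : H.map ((DerivedCategory.singleFunctor C 0).map f) ≫ e.hom.app M =
      e.hom.app S.X₁ ≫ f := by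
    have := e.hom.naturality f
    dsimp at this
    simpa using this
  calc S.f ≫ e.inv.app S.X₂ ≫ H.map g ≫ e.hom.app M
      = (S.f ≫ e.inv.app S.X₂) ≫ H.map g ≫ e.hom.app M := by rw [Category.assoc]
    _ = e.inv.app S.X₁ ≫ H.map ((DerivedCategory.singleFunctor C 0).map S.f) ≫
          H.map g ≫ e.hom.app M := by rw [h1, Category.assoc]
    _ = e.inv.app S.X₁ ≫ H.map ((DerivedCategory.singleFunctor C 0).map S.f ≫ g) ≫
          e.hom.app M := by
        exact congrArg (e.inv.app S.X₁ ≫ ·) ((congrArg (· ≫ e.hom.app M) (H.map_comp ((DerivedCategory.singleFunctor C 0).map S.f) g)).trans (Category.assoc _ _ _)).symm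
    _ = e.inv.app S.X₁ ≫ H.map ((DerivedCategory.singleFunctor C 0).map f) ≫ e.hom.app M := by
        rw [← hg']
    _ = e.inv.app S.X₁ ≫ e.hom.app S.X₁ ≫ f := by rw [h2]
    _ = f := by simp

end Stmt2Aux

/-- Let `(X, Y)` be a complete coresolving cotorsion pair and
`ω := X ∩ Y`. Then `A ∈ X` iff every morphism `A ⟶ Y` with `Y ∈ Y` factors through `ω`. -/
theorem stmt2 [HasExt.{w} C] (X Y : Set C)
    (hpair : IsCompleteCotorsionPair.{w} X Y) (hcores : IsCoresolving Y) (A : C) :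
    A ∈ X ↔ ∀ (Y' : C), Y' ∈ Y → ∀ f : A ⟶ Y', FactorsThroughClass (X ∩ Y) f := by
  constructor
  · -- forward direction
    intro hA Y' hY' f
    obtain ⟨Y₀, X₀, i, q, ⟨hz, hse⟩, hY₀, hX₀⟩ := hpair.2.2 A
    -- `Y₀ ∈ X` since `X` is closed under extensions
    have hY₀X : Y₀ ∈ X := by
      refine (hpair.1.1 Y₀).mpr (fun E hE => ?_)
      refine subsingleton_of_forall_eq 0 (fun x₂ => ?_)
      have hx : (Ext.mk₀ i).comp x₂ (zero_add 1) = 0 := by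
        haveI : Subsingleton (Ext.{w} A E 1) := (hpair.1.1 A).mp hA E hE
        exact Subsingleton.elim _ _
      obtain ⟨x₁, hx₁⟩ := Ext.contravariant_sequence_exact₂ hse E x₂ hx
      haveI : Subsingleton (Ext.{w} X₀ E 1) := (hpair.1.1 X₀).mp hX₀ E hE
      rw [Subsingleton.elim x₁ 0, Ext.comp_zero] at hx₁
      exact hx₁.symm
    have hobst : Subsingleton (Ext.{w} X₀ Y' 1) := (hpair.1.1 X₀).mp hX₀ Y' hY'
    obtain ⟨h, hh⟩ := stmt2_exists_extend_of_ext hse f hobst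
    exact ⟨Y₀, i, h, ⟨hY₀X, hY₀⟩, hh⟩
  · -- backward direction
    intro hfac
    obtain ⟨X₁, Y₁, j, π, ⟨hz1, hse1⟩, hX₁, hY₁⟩ := hpair.2.1 A
    obtain ⟨Ym, Xm, m, cm, ⟨hz2, hse2⟩, hYm, hXm⟩ := hpair.2.2 X₁
    haveI : Mono j := hse1.mono_f
    haveI : Mono m := hse2.mono_f
    haveI : Mono (j ≫ m) := mono_comp _ _
    have hzc : (j ≫ m) ≫ cokernel.π (j ≫ m) = 0 := cokernel.condition _
    have hse3 : (ShortComplex.mk (j ≫ m) (cokernel.π (j ≫ m)) hzc).ShortExact :=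
      { exact := ShortComplex.exact_cokernel _ }
    -- the cokernel `Q` belongs to `Y` since `Y` is coresolving
    have hQ : cokernel (j ≫ m) ∈ Y :=
      hcores (j ≫ m) (cokernel.π (j ≫ m)) ⟨hzc, hse3⟩ hY₁ hYm
    -- the induced map `ι : A ⟶ Q`
    obtain ⟨ι, hπι⟩ := CokernelCofork.IsColimit.desc' hse1.gIsCokernel
      (m ≫ cokernel.π (j ≫ m)) (by rw [← Category.assoc]; exact cokernel.condition _)
    simp only [Cofork.π_ofπ] at hπι
    -- factor `ι` through `ω`
    obtain ⟨W, u, v, ⟨hWX, hWY⟩, huv⟩ := hfac (cokernel (j ≫ m)) hQ ι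
    -- lift `v` along the projection to the cokernel
    have hextW : Subsingleton (Ext.{w} W Y₁ 1) := (hpair.1.1 W).mp hWX Y₁ hY₁
    obtain ⟨vt, hvt⟩ := stmt2_exists_lift_of_ext hse3 v hextW
    -- the difference `d` kills the cokernel projection, hence factors through `Y₁`
    have hdc : (π ≫ u ≫ vt - m) ≫ cokernel.π (j ≫ m) = 0 := by
      rw [Preadditive.sub_comp, Category.assoc, Category.assoc, hvt, huv, hπι, sub_self]
    obtain ⟨t, ht⟩ := KernelFork.IsLimit.lift' hse3.fIsKernel (π ≫ u ≫ vt - m) hdc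
    simp only [Fork.ι_ofι] at ht
    -- `j ≫ t = -𝟙`
    have hjt : j ≫ t = -(𝟙 Y₁) := by
      apply (cancel_mono (j ≫ m)).1
      rw [Category.assoc, ht, Preadditive.comp_sub, Preadditive.neg_comp, Category.id_comp,
        ← Category.assoc, hz1, zero_comp, zero_sub]
    -- `π` has a section `s`
    have hjφ : j ≫ (𝟙 X₁ + t ≫ j) = 0 := by
      rw [Preadditive.comp_add, Category.comp_id, ← Category.assoc, hjt,
        Preadditive.neg_comp, Category.id_comp, add_neg_cancel]
    obtain ⟨s, hs⟩ := CokernelCofork.IsColimit.desc' hse1.gIsCokernel (𝟙 X₁ + t ≫ j) hjφ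
    simp only [Cofork.π_ofπ] at hs
    have hsπ : s ≫ π = 𝟙 A := by
      haveI : Epi π := hse1.epi_g
      apply (cancel_epi π).1
      rw [← Category.assoc, hs, Category.comp_id, Preadditive.add_comp, Category.id_comp,
        Category.assoc, hz1, comp_zero, add_zero]
    -- conclude that `A ∈ X` since it is a retract of `X₁ ∈ X`
    refine (hpair.1.1 A).mpr (fun E hE => ?_)
    haveI hX₁E : Subsingleton (Ext.{w} X₁ E 1) := (hpair.1.1 X₁).mp hX₁ E hE
    refine subsingleton_of_forall_eq 0 (fun y => ?_)
    calc y = (Ext.mk₀ (𝟙 A)).comp y (zero_add 1) := (Ext.mk₀_id_comp y).symm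
      _ = (Ext.mk₀ (s ≫ π)).comp y (zero_add 1) := by rw [hsπ]
      _ = (Ext.mk₀ s).comp ((Ext.mk₀ π).comp y (zero_add 1)) (zero_add 1) := by
          rw [Ext.mk₀_comp_mk₀_assoc]
      _ = 0 := by
          rw [Subsingleton.elim ((Ext.mk₀ π).comp y (zero_add 1)) 0, Ext.comp_zero]
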